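/- Let β = (1+√5)/2 and i ≥ 2. The map T_1^{i-1} ∘ T_0 (where T_0(x)=βx, T_1(x)=βx−1) maps the interval (∑_{n=2}^{i+1} β^{-n}, ∑_{n=2}^{i+2} β^{-n}] bijectively onto (1/β, 1]. -/

import Mathlib

def T0 (β x : ℝ) : ℝ := β * x
def T1 (β x : ℝ) : ℝ := β * x - 1

theorem B0_full_branch (β : ℝ) (hβ : β = (1 + Real.sqrt 5)/2) (i : ℕ) (hi : 2 ≤ i) :
    Set.BijOn ((T1 β)^[i-1] ∘ T0 β)
      (Set.Ioc (∑ n ∈ Finset.Icc 2 (i+1), (1/β)^n) (∑ n ∈ Finset.Icc 2 (i+2), (1/β)^n))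
      (Set.Ioc (1/β) 1) := by
  have h5 : Real.sqrt 5 ^ 2 = 5 := Real.sq_sqrt (by norm_num)
  have hs0 : 0 ≤ Real.sqrt 5 := Real.sqrt_nonneg 5
  have hβ2 : β ^ 2 = β + 1 := by rw [hβ]; nlinarith
  have hβ1 : 1 < β := by rw [hβ]; nlinarith
  have hβ0 : (0:ℝ) < β := by linarith
  have hβne : β ≠ 0 := ne_of_gt hβ0
  have hinv : β * (1/β) = 1 := by field_simp
  have hpow : (0:ℝ) < β ^ i := pow_pos hβ0 i
  have hpowne : β ^ i ≠ 0 := ne_of_gt hpow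
  -- iterate formula
  have hiter : ∀ (m : ℕ) (y : ℝ), (T1 β)^[m] y = β ^ m * y - β * (β ^ m - 1) := by
    intro m
    induction m with
    | zero => intro y; simp
    | succ n ih =>
        intro y
        rw [Function.iterate_succ_apply', ih]
        simp only [T1]
        linear_combination hβ2
  have hβi : β ^ (i - 1) * β = β ^ i := by
    rw [← pow_succ]; congr 1; omega
  have hf : ∀ x : ℝ, ((T1 β)^[i-1] ∘ T0 β) x = β ^ i * x - β ^ i + β := by
    intro x
    simp only [Function.comp_apply, T0, hiter]
    linear_combination (x - 1) * hβi
  -- geometric sum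
  have hsum : ∀ m : ℕ, 1 ≤ m →
      β ^ m * (∑ n ∈ Finset.Icc 2 (m+1), (1/β)^n) = β ^ m - β + 1/β := by
    intro m hm
    induction m with
    | zero => omega
    | succ n ih =>
        rcases Nat.eq_or_lt_of_le hm with h | h
        · have hn0 : n = 0 := by omega
          subst hn0
          rw [show (0:ℕ)+1+1 = 2 from rfl, Finset.Icc_self, Finset.sum_singleton,
            pow_one, show ((1:ℝ)/β)^2 = (1/β)*(1/β) from by ring,
            ← mul_assoc, hinv, one_mul]
          ring
        · have hn : 1 ≤ n := by omega
          have hstep := ih hn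
          rw [Finset.sum_Icc_succ_top (by omega : 2 ≤ n + 1 + 1)]
          have hp : β ^ (n+1) * (1/β) ^ (n+1+1) = 1/β := by
            rw [pow_succ (1/β) (n+1), ← mul_assoc, ← mul_pow, mul_one_div_cancel hβne, one_pow,
              one_mul]
          rw [mul_add, hp, show (β:ℝ)^(n+1) = β * β^n from by ring, mul_assoc, hstep]
          linear_combination hinv - hβ2
  set L := ∑ n ∈ Finset.Icc 2 (i+1), (1/β)^n with hLdef
  set R := ∑ n ∈ Finset.Icc 2 (i+2), (1/β)^n with hRdef
  have hL : β ^ i * L = β ^ i - β + 1/β := hsum i (by omega)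
  have hR' : β ^ (i+1) * R = β ^ (i+1) - β + 1/β := hsum (i+1) (by omega)
  have hLβ : β ^ (i+1) * L = β ^ (i+1) - β ^ 2 + 1 := by
    linear_combination β * hL + hinv
  have hRβ : β ^ (i+2) * R = β ^ (i+2) - β ^ 2 + 1 := by
    linear_combination β * hR' + hinv
  have hfR : β ^ i * R - β ^ i + β = 1 := by
    have h2 : β ^ 2 * (β ^ i * R - β ^ i + β) = β ^ 2 * 1 := by
      linear_combination hRβ + (β - 1) * hβ2
    exact mul_left_cancel₀ (pow_ne_zero 2 hβne) h2
  have hfL : β * (β ^ i * L - β ^ i + β) = 1 := by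
    linear_combination hLβ
  constructor
  · -- MapsTo
    intro x hx
    obtain ⟨hx1, hx2⟩ := hx
    rw [Set.mem_Ioc, hf]
    constructor
    · rw [div_lt_iff₀ hβ0]
      have h1 : β * (β ^ i * L) < β * (β ^ i * x) :=
        mul_lt_mul_of_pos_left ((mul_lt_mul_iff_right₀ hpow).2 hx1) hβ0
      nlinarith [hfL, h1]
    · have h1 : β ^ i * x ≤ β ^ i * R := (mul_le_mul_iff_right₀ hpow).2 hx2
      linarith [hfR]
  constructor
  · -- InjOn
    intro x _ y _ hxy
    rw [hf, hf] at hxy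
    have : β ^ i * x = β ^ i * y := by linarith
    exact mul_left_cancel₀ hpowne this
  · -- SurjOn
    intro y hy
    obtain ⟨hy1, hy2⟩ := hy
    have hy' : 1 < y * β := (div_lt_iff₀ hβ0).1 hy1
    refine ⟨(y - β)/β ^ i + 1, ⟨?_, ?_⟩, ?_⟩
    · have h1 : β ^ i * L < β ^ i * ((y - β)/β ^ i + 1) := by
        rw [mul_add, mul_one, mul_div_cancel₀ _ hpowne]
        nlinarith [hfL, hy', hβ0]
      exact (mul_lt_mul_iff_right₀ hpow).1 h1
    · have h1 : β ^ i * ((y - β)/β ^ i + 1) ≤ β ^ i * R := by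
        rw [mul_add, mul_one, mul_div_cancel₀ _ hpowne]
        linarith [hfR]
      exact (mul_le_mul_iff_right₀ hpow).1 h1
    · rw [hf, mul_add, mul_one, mul_div_cancel₀ _ hpowne]
      ring
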